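/- arXiv:1103.5239 — 2 statements merged into one kernel-verified Lean document; each statement's English description precedes it below -/
import Mathlib

section
/- The Heawood graph admits no coherent 6-cycle orientation of level 4; that is, there is no choice, for each 6-cycle of the Heawood graph, of one of its two directions such that every path v_0, v_1, v_2, v_3 on 4 distinct vertices with consecutive vertices adjacent occurs as a consecutive segment of exactly one chosen directed 6-cycle. -/
set_option maxHeartbeats 2000000
set_option synthInstance.maxSize 2000
set_option synthInstance.maxHeartbeats 1000000



/-- A directed `g`-cycle of a simple graph `G`: an injective map `c : ZMod g → V`
with `c i` adjacent to `c (i+1)` for all `i`. -/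
def IsDirCycleOn {V : Type*} (G : SimpleGraph V) (g : ℕ) (c : ZMod g → V) : Prop :=
  Function.Injective c ∧ ∀ i : ZMod g, G.Adj (c i) (c (i + 1))

/-- A sequence of `k` distinct vertices with consecutive vertices adjacent. -/
def IsPathSeq {V : Type*} (G : SimpleGraph V) (k : ℕ) (v : Fin k → V) : Prop :=
  Function.Injective v ∧ ∀ (j : ℕ) (h : j + 1 < k),
    G.Adj (v ⟨j, Nat.lt_of_succ_lt h⟩) (v ⟨j + 1, h⟩)

/-- A coherent `g`-cycle orientation of level `k` of `G`: a set `D` of directed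
`g`-cycles of `G` containing, for every `g`-cycle of `G`, exactly one of its two
directions (one representative up to rotation), and such that every sequence of `k`
distinct vertices `v 0, …, v (k-1)` with consecutive vertices adjacent occurs as a
consecutive segment `(c i, c (i+1), …, c (i+k-1))` of exactly one `c ∈ D`. -/
def IsCoherentOrientation {V : Type*} (G : SimpleGraph V) (g k : ℕ)
    (D : Set (ZMod g → V)) : Prop :=
  (∀ c ∈ D, IsDirCycleOn G g c) ∧
  (∀ c : ZMod g → V, IsDirCycleOn G g c →
    ∃! c', c' ∈ D ∧
      ((∃ r : ZMod g, ∀ i, c' i = c (i + r)) ∨ (∃ r : ZMod g, ∀ i, c' i = c (r - i)))) ∧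
  (∀ v : Fin k → V, IsPathSeq G k v →
    ∃! c, c ∈ D ∧ ∃ i : ZMod g, ∀ j : Fin k, c (i + ((j : ℕ) : ZMod g)) = v j)

/-- The Heawood graph: vertex set `ZMod 14`, `i` adjacent to `i+1`, together with the
extra edges `{2x, 2x+5}` for every `x`. -/
def heawoodGraph : SimpleGraph (ZMod 14) :=
  SimpleGraph.fromRel (fun i j =>
    j = i + 1 ∨ ∃ x : ZMod 14, i = 2 * x ∧ j = 2 * x + 5)

instance : DecidableRel heawoodGraph.Adj := fun a b =>
  decidable_of_iff (a ≠ b ∧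
    ((b = a + 1 ∨ ∃ x : ZMod 14, a = 2 * x ∧ b = 2 * x + 5) ∨
     (a = b + 1 ∨ ∃ x : ZMod 14, b = 2 * x ∧ a = 2 * x + 5)))
    (by rw [heawoodGraph, SimpleGraph.fromRel_adj])

/-- Explicit 6-vectors of vertices. -/
def vec (a b c d e f : ZMod 14) : ZMod 6 → ZMod 14 := fun j =>
  if j = 0 then a else if j = 1 then b else if j = 2 then c
  else if j = 3 then d else if j = 4 then e else f

/-- Two opposite orientations of the same hexagon cannot satisfy the
uniqueness-of-representative condition. -/
lemma opp {D : Set (ZMod 6 → ZMod 14)} (hD : IsCoherentOrientation heawoodGraph 6 4 D)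
    {c c' : ZMod 6 → ZMod 14} (hc : c ∈ D) (hc' : c' ∈ D)
    {i i' s : ZMod 6} {v u : ZMod 6 → ZMod 14}
    (hv : ∀ j, c (i + j) = v j) (hu : ∀ j, c' (i' + j) = u j)
    (hrel : ∀ j, u j = v (s - j)) : False := by
  have hcyc := hD.1 c hc
  have hrev : ∀ k, c' k = c (i + s + i' - k) := by
    intro k
    have h1 : c' (i' + (k - i')) = u (k - i') := hu _
    rw [hrel] at h1
    have h2 : c (i + (s - (k - i'))) = v (s - (k - i')) := hv _
    rw [← h2] at h1
    rw [show i' + (k - i') = k by ring] at h1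
    rw [show i + (s - (k - i')) = i + s + i' - k by ring] at h1
    exact h1
  obtain ⟨w, -, hwuniq⟩ := hD.2.1 c hcyc
  have e1 : c' = w := hwuniq c' ⟨hc', Or.inr ⟨i + s + i', hrev⟩⟩
  have e2 : c = w := hwuniq c ⟨hc, Or.inl ⟨0, fun j => by rw [add_zero]⟩⟩
  have ecc : c' = c := e1.trans e2.symm
  have key : ∀ j : ZMod 6, i' + j = i + (s - j) := by
    intro j
    apply hcyc.1
    calc c (i' + j) = c' (i' + j) := by rw [ecc]
      _ = v (s - j) := by rw [hu, hrel]
      _ = c (i + (s - j)) := (hv _).symm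
  have k0 := key 0
  have k1 := key 1
  have hbad : (1 : ZMod 6) = -1 := by linear_combination k1 - k0
  exact absurd hbad (by decide)

/-- Propagation step: if the directed hexagon `v` (as a segment of `c ∈ D`) is in `D`,
then the other hexagon through the reversed path `v (t+3), v (t+2), v (t+1), v t`
must be in `D` with the forced orientation `w`. -/
lemma step {D : Set (ZMod 6 → ZMod 14)} (hD : IsCoherentOrientation heawoodGraph 6 4 D)
    (v w : ZMod 6 → ZMod 14) (t : ZMod 6)
    (h0 : w 0 = v (t + 3)) (h1 : w 1 = v (t + 2)) (h2 : w 2 = v (t + 1)) (h3 : w 3 = v t)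
    (hpinj : w 0 ≠ w 1 ∧ w 0 ≠ w 2 ∧ w 0 ≠ w 3 ∧ w 1 ≠ w 2 ∧ w 1 ≠ w 3 ∧ w 2 ≠ w 3)
    (hpadj : heawoodGraph.Adj (w 0) (w 1) ∧ heawoodGraph.Adj (w 1) (w 2) ∧
      heawoodGraph.Adj (w 2) (w 3))
    (hquad : ∀ a b : ZMod 14, heawoodGraph.Adj (w 3) a → heawoodGraph.Adj a b →
      heawoodGraph.Adj b (w 0) → a ≠ w 0 → a ≠ w 1 → a ≠ w 2 → a ≠ w 3 →
      b ≠ w 0 → b ≠ w 1 → b ≠ w 2 → b ≠ w 3 → a ≠ b →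
      (a = v (t - 1) ∧ b = v (t - 2)) ∨ (a = w 4 ∧ b = w 5))
    {c : ZMod 6 → ZMod 14} (hc : c ∈ D) {i : ZMod 6} (hv : ∀ j, c (i + j) = v j) :
    ∃ c' ∈ D, ∃ i' : ZMod 6, ∀ j, c' (i' + j) = w j := by
  obtain ⟨n01, n02, n03, n12, n13, n23⟩ := hpinj
  set p : Fin 4 → ZMod 14 := ![w 0, w 1, w 2, w 3] with hp
  have pinj : Function.Injective p := by
    intro x y hxy
    fin_cases x <;> fin_cases y <;> simp_all [p]
  have padj : ∀ (j : ℕ) (h : j + 1 < 4),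
      heawoodGraph.Adj (p ⟨j, Nat.lt_of_succ_lt h⟩) (p ⟨j + 1, h⟩) := by
    intro j h
    rcases j with _ | _ | _ | j
    · exact hpadj.1
    · exact hpadj.2.1
    · exact hpadj.2.2
    · exact absurd h (by omega)
  obtain ⟨c', ⟨hc'D, i'', hseg⟩, -⟩ := hD.2.2 p ⟨pinj, padj⟩
  have hcyc' := hD.1 c' hc'D
  have s0 : c' (i'' + 0) = w 0 := by
    have h := hseg 0
    rw [show ((((0 : Fin 4) : ℕ)) : ZMod 6) = (0 : ZMod 6) from by decide] at h
    exact h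
  have s1 : c' (i'' + 1) = w 1 := by
    have h := hseg 1
    rw [show ((((1 : Fin 4) : ℕ)) : ZMod 6) = (1 : ZMod 6) from by decide] at h
    exact h
  have s2 : c' (i'' + 2) = w 2 := by
    have h := hseg 2
    rw [show ((((2 : Fin 4) : ℕ)) : ZMod 6) = (2 : ZMod 6) from by decide] at h
    exact h
  have s3 : c' (i'' + 3) = w 3 := by
    have h := hseg 3
    rw [show ((((3 : Fin 4) : ℕ)) : ZMod 6) = (3 : ZMod 6) from by decide] at h
    exact h
  have hne : ∀ x y : ZMod 6, x ≠ y → c' (i'' + x) ≠ c' (i'' + y) := by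
    intro x y hxy h
    exact hxy (add_left_cancel (hcyc'.1 h))
  have ha1 : heawoodGraph.Adj (w 3) (c' (i'' + 4)) := by
    have h := hcyc'.2 (i'' + 3)
    rw [show i'' + 3 + 1 = i'' + 4 by ring, s3] at h
    exact h
  have hab : heawoodGraph.Adj (c' (i'' + 4)) (c' (i'' + 5)) := by
    have h := hcyc'.2 (i'' + 4)
    rw [show i'' + 4 + 1 = i'' + 5 by ring] at h
    exact h
  have hb0 : heawoodGraph.Adj (c' (i'' + 5)) (w 0) := by
    have h := hcyc'.2 (i'' + 5)
    rw [show i'' + 5 + 1 = i'' + 0 from by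
      rw [add_assoc, show (5 : ZMod 6) + 1 = 0 from by decide], s0] at h
    exact h
  rcases hquad (c' (i'' + 4)) (c' (i'' + 5)) ha1 hab hb0
      (by rw [← s0]; exact hne 4 0 (by decide)) (by rw [← s1]; exact hne 4 1 (by decide))
      (by rw [← s2]; exact hne 4 2 (by decide)) (by rw [← s3]; exact hne 4 3 (by decide))
      (by rw [← s0]; exact hne 5 0 (by decide)) (by rw [← s1]; exact hne 5 1 (by decide))
      (by rw [← s2]; exact hne 5 2 (by decide)) (by rw [← s3]; exact hne 5 3 (by decide))
      (hne 4 5 (by decide)) with ⟨ea, eb⟩ | ⟨ea, eb⟩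
  · -- bad case: c' is the reversal of c, contradiction
    exfalso
    have hu : ∀ j, c' (i'' + j) = (fun j => v (t + 3 - j)) j := by
      intro j
      rcases (show j = 0 ∨ j = 1 ∨ j = 2 ∨ j = 3 ∨ j = 4 ∨ j = 5 from by
        revert j; decide) with rfl | rfl | rfl | rfl | rfl | rfl
      · show c' (i'' + 0) = v (t + 3 - 0); rw [s0, h0]; congr 1; ring
      · show c' (i'' + 1) = v (t + 3 - 1); rw [s1, h1]; congr 1; ring
      · show c' (i'' + 2) = v (t + 3 - 2); rw [s2, h2]; congr 1; ring
      · show c' (i'' + 3) = v (t + 3 - 3); rw [s3, h3]; congr 1; ring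
      · show c' (i'' + 4) = v (t + 3 - 4); rw [ea]; congr 1; ring
      · show c' (i'' + 5) = v (t + 3 - 5); rw [eb]; congr 1; ring
    exact opp (s := t + 3) hD hc hc'D hv hu (fun _ => rfl)
  · refine ⟨c', hc'D, i'', fun j => ?_⟩
    rcases (show j = 0 ∨ j = 1 ∨ j = 2 ∨ j = 3 ∨ j = 4 ∨ j = 5 from by
      revert j; decide) with rfl | rfl | rfl | rfl | rfl | rfl
    · exact s0
    · exact s1
    · exact s2
    · exact s3
    · exact ea
    · exact eb

lemma start {D : Set (ZMod 6 → ZMod 14)} (hD : IsCoherentOrientation heawoodGraph 6 4 D) :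
    ∃ c ∈ D, ∃ i : ZMod 6,
      (∀ j, c (i + j) = vec 0 1 2 3 4 5 j) ∨ (∀ j, c (i + j) = vec 0 5 4 3 2 1 j) := by
  have hA : IsDirCycleOn heawoodGraph 6 (vec 0 1 2 3 4 5) := ⟨by decide, by decide⟩
  obtain ⟨c', ⟨hc', hrel⟩, -⟩ := hD.2.1 (vec 0 1 2 3 4 5) hA
  rcases hrel with ⟨r, h⟩ | ⟨r, h⟩
  · refine ⟨c', hc', -r, Or.inl fun j => ?_⟩
    rw [h]; congr 1; ring
  · refine ⟨c', hc', r, Or.inr fun j => ?_⟩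
    rw [h, show r - (r + j) = -j by ring]
    revert j; decide

/-- The Heawood graph admits no coherent 6-cycle orientation of level 4. -/
theorem heawood_no_coherent_orientation :
    ¬ ∃ D : Set (ZMod 6 → ZMod 14), IsCoherentOrientation heawoodGraph 6 4 D := by
  rintro ⟨D, hD⟩
  obtain ⟨c, hc, i, hor⟩ := start hD
  rcases hor with hv | hv
  · -- chain A
    obtain ⟨c1, hc1, i1, h1⟩ := step hD (vec 0 1 2 3 4 5) (vec 3 2 1 0 13 12) 0
      (by decide) (by decide) (by decide) (by decide) (by decide) (by decide) (by decide)
      hc hv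
    obtain ⟨c2, hc2, i2, h2⟩ := step hD (vec 3 2 1 0 13 12) (vec 13 0 1 2 7 8) 1
      (by decide) (by decide) (by decide) (by decide) (by decide) (by decide) (by decide)
      hc1 h1
    obtain ⟨c3, hc3, i3, h3⟩ := step hD (vec 13 0 1 2 7 8) (vec 8 7 2 1 10 9) 2
      (by decide) (by decide) (by decide) (by decide) (by decide) (by decide) (by decide)
      hc2 h2
    obtain ⟨c4, hc4, i4, h4⟩ := step hD (vec 8 7 2 1 10 9) (vec 9 10 1 2 3 4) 2
      (by decide) (by decide) (by decide) (by decide) (by decide) (by decide) (by decide)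
      hc3 h3
    obtain ⟨c5, hc5, i5, h5⟩ := step hD (vec 9 10 1 2 3 4) (vec 4 3 2 1 0 5) 2
      (by decide) (by decide) (by decide) (by decide) (by decide) (by decide) (by decide)
      hc4 h4
    exact opp (s := 4) hD hc hc5 hv h5 (by decide)
  · -- chain B
    obtain ⟨c1, hc1, i1, h1⟩ := step hD (vec 0 5 4 3 2 1) (vec 3 4 5 0 13 12) 0
      (by decide) (by decide) (by decide) (by decide) (by decide) (by decide) (by decide)
      hc hv
    obtain ⟨c2, hc2, i2, h2⟩ := step hD (vec 3 4 5 0 13 12) (vec 13 0 5 4 9 8) 1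
      (by decide) (by decide) (by decide) (by decide) (by decide) (by decide) (by decide)
      hc1 h1
    obtain ⟨c3, hc3, i3, h3⟩ := step hD (vec 13 0 5 4 9 8) (vec 8 9 4 5 6 7) 2
      (by decide) (by decide) (by decide) (by decide) (by decide) (by decide) (by decide)
      hc2 h2
    obtain ⟨c4, hc4, i4, h4⟩ := step hD (vec 8 9 4 5 6 7) (vec 7 6 5 4 3 2) 2
      (by decide) (by decide) (by decide) (by decide) (by decide) (by decide) (by decide)
      hc3 h3
    obtain ⟨c5, hc5, i5, h5⟩ := step hD (vec 7 6 5 4 3 2) (vec 2 3 4 5 0 1) 2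
      (by decide) (by decide) (by decide) (by decide) (by decide) (by decide) (by decide)
      hc4 h4
    exact opp (s := 4) hD hc hc5 hv h5 (by decide)
end

section
/- In the Heawood graph, every path on 4 distinct vertices v_0, v_1, v_2, v_3 (with consecutive vertices adjacent) lies on exactly two cycles of length 6. -/
/-- Two directed `g`-cycles are related iff one is a rotation of the other or a
rotation of the reversal of the other; the quotient by this relation is the set of
(undirected) `g`-cycles of `G`. -/
def DirCycleRel {V : Type*} (G : SimpleGraph V) (g : ℕ)
    (c c' : {c : ZMod g → V // IsDirCycleOn G g c}) : Prop :=
  (∃ r : ZMod g, ∀ i, c'.1 i = c.1 (i + r)) ∨ (∃ r : ZMod g, ∀ i, c'.1 i = c.1 (r - i))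

instance inst_s14 : DecidableRel heawoodGraph.Adj := fun a b =>
  decidable_of_iff _ (SimpleGraph.fromRel_adj _ a b).symm

def adjB (a b : ℕ) : Bool :=
  (b == (a+1) % 14) || (a == (b+1) % 14) ||
  (a % 2 == 0 && b == (a+5) % 14) || (b % 2 == 0 && a == (b+5) % 14)

lemma adj_iff : ∀ a b : ZMod 14, heawoodGraph.Adj a b ↔ adjB a.val b.val = true := by decide

def cycB (a b c d e f : ℕ) : Bool :=
  adjB d e && adjB e f && adjB f a &&
  adjB a b && adjB b c && adjB c d &&
  (a != b) && (a != c) && (a != d) && (a != e) && (a != f) &&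
  (b != c) && (b != d) && (b != e) && (b != f) &&
  (c != d) && (c != e) && (c != f) && (d != e) && (d != f) && (e != f)

def ext6 (a b c d e f : ZMod 14) : ZMod 6 → ZMod 14 := ![a, b, c, d, e, f]

lemma zmod6_cases (i : ZMod 6) : i = 0 ∨ i = 1 ∨ i = 2 ∨ i = 3 ∨ i = 4 ∨ i = 5 := by
  revert i; decide

lemma dir_iff (a b c d e f : ZMod 14) :
    IsDirCycleOn heawoodGraph 6 (ext6 a b c d e f) ↔
    ((a ≠ b ∧ a ≠ c ∧ a ≠ d ∧ a ≠ e ∧ a ≠ f ∧ b ≠ c ∧ b ≠ d ∧ b ≠ e ∧ b ≠ f ∧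
      c ≠ d ∧ c ≠ e ∧ c ≠ f ∧ d ≠ e ∧ d ≠ f ∧ e ≠ f) ∧
     (heawoodGraph.Adj a b ∧ heawoodGraph.Adj b c ∧ heawoodGraph.Adj c d ∧
      heawoodGraph.Adj d e ∧ heawoodGraph.Adj e f ∧ heawoodGraph.Adj f a)) := by
  constructor
  · rintro ⟨hinj, hadj⟩
    have key : ∀ i j : ZMod 6, i ≠ j → ext6 a b c d e f i ≠ ext6 a b c d e f j :=
      fun i j hij h => hij (hinj h)
    refine ⟨⟨?_,?_,?_,?_,?_,?_,?_,?_,?_,?_,?_,?_,?_,?_,?_⟩, hadj 0, hadj 1, hadj 2, hadj 3, hadj 4, hadj 5⟩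
    · exact key 0 1 (by decide)
    · exact key 0 2 (by decide)
    · exact key 0 3 (by decide)
    · exact key 0 4 (by decide)
    · exact key 0 5 (by decide)
    · exact key 1 2 (by decide)
    · exact key 1 3 (by decide)
    · exact key 1 4 (by decide)
    · exact key 1 5 (by decide)
    · exact key 2 3 (by decide)
    · exact key 2 4 (by decide)
    · exact key 2 5 (by decide)
    · exact key 3 4 (by decide)
    · exact key 3 5 (by decide)
    · exact key 4 5 (by decide)
  · rintro ⟨⟨h1,h2,h3,h4,h5,h6,h7,h8,h9,h10,h11,h12,h13,h14,h15⟩, A1,A2,A3,A4,A5,A6⟩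
    constructor
    · intro i j hij
      rcases zmod6_cases i with rfl|rfl|rfl|rfl|rfl|rfl <;>
        rcases zmod6_cases j with rfl|rfl|rfl|rfl|rfl|rfl <;>
        first
          | rfl
          | (exact absurd hij (by assumption))
          | (exact absurd hij.symm (by assumption))
    · intro i
      rcases zmod6_cases i with rfl|rfl|rfl|rfl|rfl|rfl <;> assumption

lemma val_eq_iff (x y : ZMod 14) : x.val = y.val ↔ x = y :=
  ⟨fun h => ZMod.val_injective 14 h, fun h => by rw [h]⟩

lemma cyc_iff (A B C D E F : ZMod 14) :
    IsDirCycleOn heawoodGraph 6 (ext6 A B C D E F) ↔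
    cycB A.val B.val C.val D.val E.val F.val = true := by
  rw [dir_iff]
  simp only [cycB, Bool.and_eq_true, bne_iff_ne, ne_eq, val_eq_iff, ← adj_iff]
  tauto

def pairs (a b c d : ℕ) : List (ℕ × ℕ) :=
  ((List.range 14).product (List.range 14)).filter (fun p => cycB a b c d p.1 p.2)

def allOK : Bool := (List.range 14).all fun a => (List.range 14).all fun b =>
  !(adjB a b) || ((List.range 14).all fun c => !(adjB b c && a != c) ||
    ((List.range 14).all fun d => !(adjB c d && a != d && b != d) ||
      ((pairs a b c d).length == 2)))

set_option maxRecDepth 100000 in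
set_option maxHeartbeats 8000000 in
lemma allOK_eq : allOK = true := by decide

lemma char_exists (v : Fin 4 → ZMod 14) (hv : IsPathSeq heawoodGraph 4 v) :
    ∃ P₁ P₂ : ZMod 14 × ZMod 14, P₁ ≠ P₂ ∧ ∀ ef : ZMod 14 × ZMod 14,
      IsDirCycleOn heawoodGraph 6 (ext6 (v 0) (v 1) (v 2) (v 3) ef.1 ef.2) ↔
        (ef = P₁ ∨ ef = P₂) := by
  obtain ⟨hinj, hadj⟩ := hv
  set a := (v 0).val with ha
  set b := (v 1).val with hb
  set c := (v 2).val with hc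
  set d := (v 3).val with hd
  have hA1 : heawoodGraph.Adj (v 0) (v 1) := hadj 0 (by norm_num)
  have hA2 : heawoodGraph.Adj (v 1) (v 2) := hadj 1 (by norm_num)
  have hA3 : heawoodGraph.Adj (v 2) (v 3) := hadj 2 (by norm_num)
  have hab : adjB a b = true := (adj_iff _ _).mp hA1
  have hbc : adjB b c = true := (adj_iff _ _).mp hA2
  have hcd : adjB c d = true := (adj_iff _ _).mp hA3
  have hac : a ≠ c := fun h => hinj.ne (show (0:Fin 4) ≠ 2 by decide) (val_eq_iff _ _ |>.mp h)
  have had : a ≠ d := fun h => hinj.ne (show (0:Fin 4) ≠ 3 by decide) (val_eq_iff _ _ |>.mp h)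
  have hbd : b ≠ d := fun h => hinj.ne (show (1:Fin 4) ≠ 3 by decide) (val_eq_iff _ _ |>.mp h)
  have H1 := List.all_eq_true.mp allOK_eq a (List.mem_range.mpr (ZMod.val_lt (v 0)))
  simp only [List.all_eq_true, List.mem_range, Bool.or_eq_true, Bool.not_eq_true',
    Bool.and_eq_true, bne_iff_ne, ne_eq, not_and, not_not, beq_iff_eq, not_forall,
    Bool.not_eq_true] at H1
  have hlen : (pairs a b c d).length = 2 :=
    (((H1 b (ZMod.val_lt (v 1))).resolve_left (by simp [hab]) c
        (ZMod.val_lt (v 2))).resolve_left (by simp [hbc, hac]) d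
        (ZMod.val_lt (v 3))).resolve_left (by simp [hcd, had, hbd])
  obtain ⟨⟨p1, p2⟩, ⟨q1, q2⟩, hpq⟩ := List.length_eq_two.mp hlen
  have hnodup : (pairs a b c d).Nodup :=
    List.Nodup.filter _ ((List.nodup_range : (List.range 14).Nodup).product (List.nodup_range : (List.range 14).Nodup))
  have hpqne : ((p1, p2) : ℕ × ℕ) ≠ (q1, q2) := by
    rw [hpq] at hnodup
    have := (List.nodup_cons.mp hnodup).1
    simpa using this
  have hmem : ∀ x y : ℕ, (x, y) ∈ pairs a b c d ↔
      (x < 14 ∧ y < 14) ∧ cycB a b c d x y = true := by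
    intro x y
    simp [pairs, List.mem_filter, List.pair_mem_product, List.mem_range, and_assoc]
  have hp : ((p1 < 14 ∧ p2 < 14) ∧ cycB a b c d p1 p2 = true) := by
    rw [← hmem]
    rw [hpq]; simp
  have hq : ((q1 < 14 ∧ q2 < 14) ∧ cycB a b c d q1 q2 = true) := by
    rw [← hmem]
    rw [hpq]; simp
  obtain ⟨⟨hp1, hp2⟩, hpc⟩ := hp
  obtain ⟨⟨hq1, hq2⟩, hqc⟩ := hq
  refine ⟨((p1 : ZMod 14), (p2 : ZMod 14)), ((q1 : ZMod 14), (q2 : ZMod 14)), ?_, ?_⟩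
  · intro h
    apply hpqne
    have h1 := congrArg Prod.fst h
    have h2 := congrArg Prod.snd h
    simp only at h1 h2
    have e1 := congrArg ZMod.val h1
    have e2 := congrArg ZMod.val h2
    rw [ZMod.val_cast_of_lt hp1, ZMod.val_cast_of_lt hq1] at e1
    rw [ZMod.val_cast_of_lt hp2, ZMod.val_cast_of_lt hq2] at e2
    rw [e1, e2]
  · intro ef
    rw [cyc_iff]
    constructor
    · intro hcy
      have hm : (ef.1.val, ef.2.val) ∈ pairs a b c d :=
        (hmem _ _).mpr ⟨⟨ZMod.val_lt _, ZMod.val_lt _⟩, hcy⟩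
      rw [hpq] at hm
      simp only [List.mem_cons, List.mem_singleton, List.not_mem_nil, or_false,
        Prod.mk.injEq] at hm
      rcases hm with ⟨h1, h2⟩ | ⟨h1, h2⟩
      · left
        have e1 : ef.1 = (p1 : ZMod 14) :=
          (ZMod.natCast_rightInverse ef.1).symm.trans (by rw [h1])
        have e2 : ef.2 = (p2 : ZMod 14) :=
          (ZMod.natCast_rightInverse ef.2).symm.trans (by rw [h2])
        exact Prod.ext e1 e2
      · right
        have e1 : ef.1 = (q1 : ZMod 14) :=
          (ZMod.natCast_rightInverse ef.1).symm.trans (by rw [h1])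
        have e2 : ef.2 = (q2 : ZMod 14) :=
          (ZMod.natCast_rightInverse ef.2).symm.trans (by rw [h2])
        exact Prod.ext e1 e2
    · rintro (rfl | rfl)
      · show cycB a b c d ((p1 : ZMod 14)).val ((p2 : ZMod 14)).val = true
        rwa [ZMod.val_cast_of_lt hp1, ZMod.val_cast_of_lt hp2]
      · show cycB a b c d ((q1 : ZMod 14)).val ((q2 : ZMod 14)).val = true
        rwa [ZMod.val_cast_of_lt hq1, ZMod.val_cast_of_lt hq2]


lemma dirCycleRel_equiv {V : Type*} (G : SimpleGraph V) (g : ℕ) :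
    Equivalence (DirCycleRel G g) := by
  constructor
  · intro c; exact Or.inl ⟨0, fun i => by rw [add_zero]⟩
  · rintro c c' (⟨r, h⟩ | ⟨r, h⟩)
    · exact Or.inl ⟨-r, fun i => by rw [h (i + -r)]; ring_nf⟩
    · exact Or.inr ⟨r, fun i => by rw [h (r - i)]; ring_nf⟩
  · rintro c c' c'' (⟨r, h⟩ | ⟨r, h⟩) (⟨s, h'⟩ | ⟨s, h'⟩)
    · exact Or.inl ⟨s + r, fun i => by rw [h' i, h (i + s)]; ring_nf⟩
    · exact Or.inr ⟨s + r, fun i => by rw [h' i, h (s - i)]; ring_nf⟩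
    · exact Or.inr ⟨r - s, fun i => by rw [h' i, h (i + s)]; ring_nf⟩
    · exact Or.inl ⟨r - s, fun i => by rw [h' i, h (s - i)]; ring_nf⟩

lemma quot_mk_eq_iff {V : Type*} (G : SimpleGraph V) (g : ℕ)
    (c c' : {c : ZMod g → V // IsDirCycleOn G g c}) :
    Quot.mk (DirCycleRel G g) c = Quot.mk (DirCycleRel G g) c' ↔ DirCycleRel G g c c' := by
  constructor
  · intro h
    exact (Equivalence.eqvGen_iff (dirCycleRel_equiv G g)).mp (Quot.eq.mp h)
  · exact Quot.sound

lemma rot_cycle {V : Type*} {G : SimpleGraph V} {g : ℕ} {c : ZMod g → V}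
    (hc : IsDirCycleOn G g c) (i : ZMod g) : IsDirCycleOn G g (fun k => c (i + k)) := by
  constructor
  · intro x y hxy
    have := hc.1 hxy
    exact by rwa [add_right_inj] at this
  · intro k
    have := hc.2 (i + k)
    rwa [add_assoc] at this

lemma card_of_two {α : Type*} (P : α → Prop) (a b : α) (hne : a ≠ b)
    (h : ∀ x, P x ↔ x = a ∨ x = b) : Nat.card {x // P x} = 2 := by
  have hset : {x | P x} = ({a, b} : Set α) := Set.ext fun x => by
    rw [Set.mem_setOf_eq, h x, Set.mem_insert_iff, Set.mem_singleton_iff]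
  calc Nat.card {x // P x} = ({a, b} : Set α).ncard := by
        rw [← Nat.card_coe_set_eq, ← hset]; rfl
    _ = 2 := Set.ncard_pair hne

/-- In the Heawood graph, every path on 4 distinct vertices lies on exactly two
cycles of length 6 (a path lies on a cycle iff its vertices occur consecutively,
in one of the two directions, along the cycle). -/
theorem heawood_path_on_two_hexagons (v : Fin 4 → ZMod 14)
    (hv : IsPathSeq heawoodGraph 4 v) :
    Nat.card {q : Quot (DirCycleRel heawoodGraph 6) //
      ∃ c : {c : ZMod 6 → ZMod 14 // IsDirCycleOn heawoodGraph 6 c},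
        q = Quot.mk _ c ∧ ∃ i : ZMod 6, ∀ j : Fin 4, c.1 (i + ((j : ℕ) : ZMod 6)) = v j}
      = 2 := by
  obtain ⟨P₁, P₂, hne, hchar⟩ : ∃ P₁ P₂ : ZMod 14 × ZMod 14, P₁ ≠ P₂ ∧
      ∀ ef : ZMod 14 × ZMod 14,
        IsDirCycleOn heawoodGraph 6 (ext6 (v 0) (v 1) (v 2) (v 3) ef.1 ef.2) ↔
          (ef = P₁ ∨ ef = P₂) := char_exists v hv
  set Q : ZMod 14 × ZMod 14 → Prop := fun ef =>
    IsDirCycleOn heawoodGraph 6 (ext6 (v 0) (v 1) (v 2) (v 3) ef.1 ef.2) with hQ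
  let T := {q : Quot (DirCycleRel heawoodGraph 6) //
      ∃ c : {c : ZMod 6 → ZMod 14 // IsDirCycleOn heawoodGraph 6 c},
        q = Quot.mk _ c ∧ ∃ i : ZMod 6, ∀ j : Fin 4, c.1 (i + ((j : ℕ) : ZMod 6)) = v j}
  have hseg : ∀ (p : {ef // Q ef}) (j : Fin 4),
      ext6 (v 0) (v 1) (v 2) (v 3) p.1.1 p.1.2 (0 + ((j : ℕ) : ZMod 6)) = v j := by
    intro p j
    fin_cases j <;> rfl
  let φ : {ef // Q ef} → T := fun p =>
    ⟨Quot.mk _ ⟨ext6 (v 0) (v 1) (v 2) (v 3) p.1.1 p.1.2, p.2⟩,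
      ⟨ext6 (v 0) (v 1) (v 2) (v 3) p.1.1 p.1.2, p.2⟩, rfl, 0, hseg p⟩
  have hinjφ : Function.Injective φ := by
    intro p q hpq
    have h1 : Quot.mk (DirCycleRel heawoodGraph 6)
        ⟨ext6 (v 0) (v 1) (v 2) (v 3) p.1.1 p.1.2, p.2⟩ =
        Quot.mk (DirCycleRel heawoodGraph 6)
        ⟨ext6 (v 0) (v 1) (v 2) (v 3) q.1.1 q.1.2, q.2⟩ := congrArg Subtype.val hpq
    have h2 := (quot_mk_eq_iff heawoodGraph 6 _ _).mp h1
    set cp := ext6 (v 0) (v 1) (v 2) (v 3) p.1.1 p.1.2 with hcp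
    set cq := ext6 (v 0) (v 1) (v 2) (v 3) q.1.1 q.1.2 with hcq
    rcases h2 with ⟨r, h⟩ | ⟨r, h⟩
    · have h0 := h 0
      rw [zero_add] at h0
      have hr : r = 0 := p.2.1 (show cp r = cp 0 from h0.symm)
      subst hr
      have h4 := h 4; have h5 := h 5
      rw [add_zero] at h4 h5
      exact Subtype.ext (Prod.ext (show p.1.1 = q.1.1 from h4.symm)
        (show p.1.2 = q.1.2 from h5.symm))
    · have h0 := h 0
      rw [sub_zero] at h0
      have hr : r = 0 := p.2.1 (show cp r = cp 0 from h0.symm)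
      subst hr
      have h1' := h 1
      have : cp 1 = cp (0 - 1) := h1'
      have := p.2.1 this
      exact absurd this (by decide)
  have hsurjφ : Function.Surjective φ := by
    rintro ⟨qq, c, hq, i, hi⟩
    refine ⟨⟨(c.1 (i + 4), c.1 (i + 5)), ?_⟩, ?_⟩
    · show IsDirCycleOn heawoodGraph 6 (ext6 (v 0) (v 1) (v 2) (v 3) (c.1 (i+4)) (c.1 (i+5)))
      have hfun : ext6 (v 0) (v 1) (v 2) (v 3) (c.1 (i+4)) (c.1 (i+5)) =
          fun k => c.1 (i + k) := by
        funext k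
        rcases zmod6_cases k with rfl|rfl|rfl|rfl|rfl|rfl
        · exact (hi 0).symm
        · exact (hi 1).symm
        · exact (hi 2).symm
        · exact (hi 3).symm
        · rfl
        · rfl
      rw [hfun]
      exact rot_cycle c.2 i
    · apply Subtype.ext
      show Quot.mk _ _ = qq
      rw [hq]
      apply Quot.sound
      have hfun : ext6 (v 0) (v 1) (v 2) (v 3) (c.1 (i+4)) (c.1 (i+5)) =
          fun k => c.1 (i + k) := by
        funext k
        rcases zmod6_cases k with rfl|rfl|rfl|rfl|rfl|rfl
        · exact (hi 0).symm
        · exact (hi 1).symm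
        · exact (hi 2).symm
        · exact (hi 3).symm
        · rfl
        · rfl
      refine Or.inl ⟨-i, fun k => ?_⟩
      show c.1 k = ext6 (v 0) (v 1) (v 2) (v 3) (c.1 (i+4)) (c.1 (i+5)) (k + -i)
      have := congrFun hfun (k + -i)
      rw [this]
      ring_nf
  have hcardT : Nat.card T = Nat.card {ef // Q ef} :=
    (Nat.card_congr (Equiv.ofBijective φ ⟨hinjφ, hsurjφ⟩)).symm
  rw [show Nat.card _ = Nat.card T from rfl, hcardT]
  exact card_of_two Q P₁ P₂ hne hchar
end
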